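/- Let s, t ≥ 2 and z > t·(s−1) be natural numbers, set θ' = t·(2s−1) and p = min(⌊(z−1)/(t·(s−1))⌋, t−1). Then the finite set P_SA = (⋃_{l=0}^{p−1} {t·s + θ'·l + w : 0 ≤ w ≤ t·(s−1)−1}) ∪ {t·s + θ'·p + u : 0 ≤ u ≤ z−1−p·t·(s−1)} has exactly z elements. -/
import Mathlib

private lemma polydot_aux_div (θ l w : ℕ) (hθ : 0 < θ) (hw : w < θ) :
    (θ * l + w) / θ = l := by
  rw [Nat.mul_add_div hθ, Nat.div_eq_of_lt hw, add_zero]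

private lemma polydot_aux_mod (θ l w : ℕ) (hw : w < θ) :
    (θ * l + w) % θ = w := by
  rw [Nat.mul_add_mod, Nat.mod_eq_of_lt hw]

private lemma polydot_block_inj (θ l1 w1 l2 w2 : ℕ) (h1 : w1 < θ) (h2 : w2 < θ)
    (h : θ * l1 + w1 = θ * l2 + w2) : l1 = l2 ∧ w1 = w2 := by
  have hθ : 0 < θ := by omega
  constructor
  · have := congrArg (· / θ) h
    simpa [polydot_aux_div θ _ _ hθ h1, polydot_aux_div θ _ _ hθ h2] using this
  · have := congrArg (· % θ) h
    simpa [polydot_aux_mod θ _ _ h1, polydot_aux_mod θ _ _ h2] using this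

private lemma polydot_block_lt (θ l1 w1 l2 w2 : ℕ) (h1 : w1 < θ) (hl : l1 < l2) :
    θ * l1 + w1 < θ * l2 + w2 := by
  calc θ * l1 + w1 < θ * l1 + θ := Nat.add_lt_add_left h1 _
    _ = θ * (l1 + 1) := (Nat.mul_succ θ l1).symm
    _ ≤ θ * l2 := Nat.mul_le_mul_left θ hl
    _ ≤ θ * l2 + w2 := Nat.le_add_right _ _

/-- For s, t ≥ 2 and z > t·(s−1), with θ' = t·(2s−1) and
p = min(⌊(z−1)/(t·(s−1))⌋, t−1), the support
P_SA = (⋃_{l<p} {ts + θ'·l + w : w < t(s−1)}) ∪ {ts + θ'·p + u : u ≤ z−1−p·t·(s−1)}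
has exactly z elements. -/
theorem polydot_PSA_card (s t z : ℕ) (hs : 2 ≤ s) (ht : 2 ≤ t)
    (hz : t * (s - 1) < z) :
    ({n : ℕ | ∃ l w, l < min ((z - 1) / (t * (s - 1))) (t - 1) ∧ w < t * (s - 1) ∧
        n = t * s + (t * (2 * s - 1)) * l + w} ∪
     {n : ℕ | ∃ u, u ≤ z - 1 - (min ((z - 1) / (t * (s - 1))) (t - 1)) * (t * (s - 1)) ∧
        n = t * s + (t * (2 * s - 1)) * (min ((z - 1) / (t * (s - 1))) (t - 1)) + u}).ncard
      = z := by
  have hm2 : 2 ≤ t * (s - 1) := by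
    calc 2 = 2 * 1 := by norm_num
      _ ≤ t * (s - 1) := Nat.mul_le_mul ht (by omega)
  set m := t * (s - 1) with hmdef
  have hm0 : 0 < m := by omega
  set p := min ((z - 1) / m) (t - 1) with hpdef
  have hpm : p * m ≤ z - 1 := by
    calc p * m ≤ ((z - 1) / m) * m := Nat.mul_le_mul_right m (min_le_left _ _)
      _ ≤ z - 1 := Nat.div_mul_le_self _ _
  have hz1 : 1 ≤ z := by omega
  have hθeq : t * (2 * s - 1) = t * s + m := by
    rw [show 2 * s - 1 = s + (s - 1) by omega, Nat.mul_add, ← hmdef]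
  rw [hθeq]
  set θ := t * s + m with hθdef
  have hts1 : 0 < t * s := Nat.mul_pos (by omega) (by omega)
  have hmθ : m < θ := by rw [hθdef]; exact Nat.lt_add_of_pos_left hts1
  set f : ℕ → ℕ := fun k =>
    if k < p * m then t * s + (θ * (k / m) + k % m)
    else t * s + (θ * p + (k - p * m)) with hfdef
  have hfinj : Function.Injective f := by
    intro k1 k2 h
    simp only [hfdef] at h
    split_ifs at h with h1 h2 h2
    · have h' := Nat.add_left_cancel h
      obtain ⟨hl, hw⟩ := polydot_block_inj θ _ _ _ _
        (lt_trans (Nat.mod_lt _ hm0) hmθ) (lt_trans (Nat.mod_lt _ hm0) hmθ) h'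
      have d1 := Nat.div_add_mod k1 m
      have d2 := Nat.div_add_mod k2 m
      rw [hl, hw] at d1
      exact d1.symm.trans d2
    · have h' := Nat.add_left_cancel h
      have hl1 : k1 / m < p := (Nat.div_lt_iff_lt_mul hm0).mpr h1
      exact absurd h' (Nat.ne_of_lt
        (polydot_block_lt θ _ _ _ _ (lt_trans (Nat.mod_lt _ hm0) hmθ) hl1))
    · have h' := Nat.add_left_cancel h
      have hl2 : k2 / m < p := (Nat.div_lt_iff_lt_mul hm0).mpr h2
      exact absurd h'.symm (Nat.ne_of_lt
        (polydot_block_lt θ _ _ _ _ (lt_trans (Nat.mod_lt _ hm0) hmθ) hl2))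
    · have h' := Nat.add_left_cancel (Nat.add_left_cancel h)
      have e1 : p * m ≤ k1 := le_of_not_gt h1
      have e2 : p * m ≤ k2 := le_of_not_gt h2
      omega
  have hset : ({n : ℕ | ∃ l w, l < p ∧ w < m ∧ n = t * s + θ * l + w} ∪
      {n : ℕ | ∃ u, u ≤ z - 1 - p * m ∧ n = t * s + θ * p + u}) = f '' Set.Iio z := by
    ext n
    simp only [Set.mem_union, Set.mem_setOf_eq, Set.mem_image, Set.mem_Iio]
    constructor
    · rintro (⟨l, w, hl, hw, rfl⟩ | ⟨u, hu, rfl⟩)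
      · refine ⟨m * l + w, ?_, ?_⟩
        · have hk : m * l + w < p * m := by
            calc m * l + w < m * (l + 1) := by rw [Nat.mul_succ]; exact Nat.add_lt_add_left hw _
              _ ≤ m * p := Nat.mul_le_mul_left m hl
              _ = p * m := Nat.mul_comm m p
          omega
        · have hk : m * l + w < p * m := by
            calc m * l + w < m * (l + 1) := by rw [Nat.mul_succ]; exact Nat.add_lt_add_left hw _
              _ ≤ m * p := Nat.mul_le_mul_left m hl
              _ = p * m := Nat.mul_comm m p
          simp only [hfdef, if_pos hk, polydot_aux_div m l w hm0 hw,
            polydot_aux_mod m l w hw, add_assoc]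
      · refine ⟨p * m + u, ?_, ?_⟩
        · have : p * m + u ≤ z - 1 := by
            calc p * m + u ≤ p * m + (z - 1 - p * m) := Nat.add_le_add_left hu _
              _ = z - 1 := by omega
          omega
        · have hnk : ¬ (p * m + u < p * m) := by omega
          simp only [hfdef, if_neg hnk, Nat.add_sub_cancel_left, add_assoc]
    · rintro ⟨k, hk, rfl⟩
      simp only [hfdef]
      split_ifs with h1
      · exact Or.inl ⟨k / m, k % m, (Nat.div_lt_iff_lt_mul hm0).mpr h1,
          Nat.mod_lt _ hm0, by rw [add_assoc]⟩
      · refine Or.inr ⟨k - p * m, ?_, by rw [add_assoc]⟩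
        have : p * m ≤ k := le_of_not_gt h1
        omega
  rw [hset, Set.ncard_image_of_injOn hfinj.injOn,
    show (Set.Iio z : Set ℕ) = ↑(Finset.range z) by simp [Finset.coe_range],
    Set.ncard_coe_finset, Finset.card_range]
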